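/- Modified coding forcing: fix α regular, n(α) < ω, and a set A(α) ⊆ α. Define extension on Q(α)-conditions as before but additionally require: for p ≤ q, p(n(α))(2β+2) = 1 iff β ∈ A(α), for all 2β+2 ∈ [α(q), α(p)). Then for any sufficiently generic filter G (meeting the density sets D_β = {p : α(p) > β}), the set A(α) is definable from S_{n(α)} = ⋃{p(n(α)) : p ∈ G}: namely A(α) = {β : S_{n(α)}(2β+2) = 1} up to a bounded error determined by the first condition. -/
import Mathlib


open Ordinal

/-- A condition in `Q(α)`: a sequence `p = ⟨p(n) : n ∈ ω⟩` where each `p(n)`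
is a function from `α(p)` to `2` for some `α(p) < α`.  We represent `p(n)` as a
total function into `Bool` which is `false` off the domain (so conditions are
canonical and extensionality holds). -/
structure QCond (α : Ordinal) where
  len : Ordinal
  len_lt : len < α
  f : ℕ → Ordinal → Bool
  f_off : ∀ n δ, len ≤ δ → f n δ = false

/-- The extension relation of `Q(α)`, relative to the partition `b` of the odd
ordinals below `α`: `p ≤ q` iff `α(p) ≥ α(q)`, each `p(n)` extends `q(n)`, and
whenever `q(n+1)(γ) = 1` and `δ ∈ b γ ∩ [α(q), α(p))` then `p(n)(δ) = 0`. -/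
def QExt {α : Ordinal} (b : Ordinal → Set Ordinal) (p q : QCond α) : Prop :=
  q.len ≤ p.len ∧
  (∀ n δ, δ < q.len → p.f n δ = q.f n δ) ∧
  (∀ n γ δ, γ < q.len → q.f (n+1) γ = true → δ ∈ b γ → q.len ≤ δ → δ < p.len →
    p.f n δ = false)

/-- The modified (coding) extension relation: as before, but additionally for
`p ≤ q` we require `p(n(α))(2β+2) = 1` iff `β ∈ A(α)`, for all
`2β+2 ∈ [α(q), α(p))`. -/
def QExtCode {α : Ordinal} (b : Ordinal → Set Ordinal) (nα : ℕ)
    (A : Set Ordinal) (p q : QCond α) : Prop :=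
  QExt b p q ∧
  ∀ β : Ordinal, q.len ≤ 2*β + 2 → 2*β + 2 < p.len →
    (p.f nα (2*β + 2) = true ↔ β ∈ A)

/-- in the modified coding forcing with parameters `n(α) < ω` and
`A(α) ⊆ α`, for any filter `G` meeting the dense sets `D_β = {p : α(p) > β}`,
the set `A(α)` is definable from `S_{n(α)} = ⋃ {p(n(α)) : p ∈ G}` up to a
bounded error: for any `p₀ ∈ G` and all `β` with `2β+2 ≥ α(p₀)` and
`2β+2 < α`, `β ∈ A(α)` iff `S_{n(α)}(2β+2) = 1`. -/
theorem coding_forcing_defines_A (α : Ordinal) (b : Ordinal → Set Ordinal)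
    (nα : ℕ) (A : Set Ordinal) (hA : A ⊆ Set.Iio α)
    (G : Set (QCond α))
    -- `G` is a filter: downward directed and upward closed
    (hdir : ∀ p ∈ G, ∀ q ∈ G, ∃ r ∈ G, QExtCode b nα A r p ∧ QExtCode b nα A r q)
    (hup : ∀ p ∈ G, ∀ q, QExtCode b nα A p q → q ∈ G)
    -- `G` meets every dense set `D_β`, `β < α`
    (hgen : ∀ β < α, ∃ p ∈ G, β < p.len)
    -- `S` is `S_{n(α)}`, the union of the `p(n(α))` for `p ∈ G`
    (S : Ordinal → Bool)
    (hS : ∀ δ, S δ = true ↔ ∃ p ∈ G, δ < p.len ∧ p.f nα δ = true) :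
    ∀ p₀ ∈ G, ∀ β : Ordinal, p₀.len ≤ 2*β + 2 → 2*β + 2 < α →
      (β ∈ A ↔ S (2*β + 2) = true) := by
  intro p₀ hp₀ β hβ₀ hβα
  obtain ⟨p, hpG, hp⟩ := hgen (2*β+2) hβα
  obtain ⟨r, hrG, hrp, hrp₀⟩ := hdir p hpG p₀ hp₀
  have hrlen : 2*β + 2 < r.len := lt_of_lt_of_le hp hrp.1.1
  have hcode : r.f nα (2*β+2) = true ↔ β ∈ A := hrp₀.2 β hβ₀ hrlen
  constructor
  · intro hβA
    exact (hS _).2 ⟨r, hrG, hrlen, hcode.2 hβA⟩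
  · intro hStrue
    obtain ⟨q, hqG, hqlen, hqf⟩ := (hS _).1 hStrue
    obtain ⟨s, hsG, hsq, hsr⟩ := hdir q hqG r hrG
    have h1 : s.f nα (2*β+2) = q.f nα (2*β+2) := hsq.1.2.1 nα _ hqlen
    have h2 : s.f nα (2*β+2) = r.f nα (2*β+2) := hsr.1.2.1 nα _ hrlen
    exact hcode.1 (h2 ▸ h1 ▸ hqf)
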